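/- arXiv:0709.1596 — 6 statements merged into one kernel-verified Lean document; each statement's English description precedes it below -/
import Mathlib

section
/- Let d > 0, T_r > 0, k a positive integer, T_h = k·T_r, α_y ∈ (0,1] and μ ≥ 0. Let y* = μ T_r·( ((1-e^{-d T_h})/(1-e^{-d T_r}))·(1-α_y) + α_y ) / (1-(1-α_y)·e^{-d T_h}) and y_ph(t) = y*·e^{-d·(t mod T_h)} + μ T_r·e^{-d·(t mod T_r)}·Σ_{j=0}^{⌊(t mod T_h)/T_r⌋ - 1} e^{-j d T_r}, where (t mod P) denotes the representative of t modulo P in [0,P). Then ∫_0^{T_h} y_ph(t) dt = (μ T_h/d)·( 1 - ( α_y·(1-e^{-d T_h}) / (1-(1-α_y)·e^{-d T_h}) )·( e^{-d T_h/k} / (k·(1-e^{-d T_h/k})) ) ). -/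
/-- The representative of `t` modulo `P` lying in `[0, P)` (for `P > 0`). -/
noncomputable def rmod (P t : ℝ) : ℝ := t - P * (⌊t / P⌋ : ℝ)

open MeasureTheory

lemma int_exp_neg (d a b : ℝ) (hd : d ≠ 0) :
    ∫ t in a..b, Real.exp (-d * t) = (Real.exp (-d * a) - Real.exp (-d * b)) / d := by
  have h : ∀ t ∈ Set.uIcc a b,
      HasDerivAt (fun t => -Real.exp (-d * t) / d) (Real.exp (-d * t)) t := by
    intro t _
    have h1 : HasDerivAt (fun t : ℝ => -d * t) (-d) t := by
      simpa using (hasDerivAt_id t).const_mul (-d)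
    have h2 := (Real.hasDerivAt_exp (-d * t)).comp t h1
    have h3 : HasDerivAt (fun t => -Real.exp (-d * t) / d)
        (-(Real.exp (-d * t) * -d) / d) t := h2.neg.div_const d
    convert h3 using 1
    field_simp
  rw [intervalIntegral.integral_eq_sub_of_hasDerivAt h
    ((Real.continuous_exp.comp (continuous_const.mul continuous_id)).intervalIntegrable a b)]
  ring

set_option maxHeartbeats 1600000 in
/-- The integral over one harvest period of the pest-free periodic predator
solution, when releases are more frequent than harvests (`T_h = k·T_r`). -/
theorem stmt_5 (d Tr Th αy μ : ℝ) (k : ℕ) (hk : 0 < k) (hd : 0 < d) (hTr : 0 < Tr)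
    (hTh : Th = (k : ℝ) * Tr) (hαy : αy ∈ Set.Ioc (0 : ℝ) 1) (hμ : 0 ≤ μ)
    (ystar : ℝ)
    (hystar : ystar = μ * Tr * ((1 - Real.exp (-d * Th)) / (1 - Real.exp (-d * Tr)) * (1 - αy)
      + αy) / (1 - (1 - αy) * Real.exp (-d * Th)))
    (yph : ℝ → ℝ)
    (hyph : ∀ t : ℝ, yph t = ystar * Real.exp (-d * rmod Th t)
      + μ * Tr * Real.exp (-d * rmod Tr t)
        * ∑ j ∈ Finset.range (⌊rmod Th t / Tr⌋.toNat), Real.exp (-(j : ℝ) * d * Tr)) :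
    ∫ t in (0 : ℝ)..Th, yph t
      = μ * Th / d * (1 - αy * (1 - Real.exp (-d * Th)) / (1 - (1 - αy) * Real.exp (-d * Th))
        * (Real.exp (-d * Th / k) / ((k : ℝ) * (1 - Real.exp (-d * Th / k))))) := by
  obtain ⟨hαy0, hαy1⟩ := hαy
  set E := Real.exp (-d * Tr) with hE
  have hE0 : 0 < E := Real.exp_pos _
  have hE1 : E < 1 := by
    rw [hE, Real.exp_lt_one_iff]
    nlinarith
  have hk0 : (k : ℝ) ≠ 0 := Nat.cast_ne_zero.mpr hk.ne'
  have hThk : Real.exp (-d * Th) = E ^ k := by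
    rw [hTh, hE, ← Real.exp_nat_mul]
    congr 1; ring
  have hThdk : Real.exp (-d * Th / k) = E := by
    rw [hTh, hE]
    congr 1
    field_simp
  have hterm : ∀ j : ℕ, Real.exp (-(j : ℝ) * d * Tr) = E ^ j := by
    intro j
    rw [hE, ← Real.exp_nat_mul]
    congr 1; ring
  have hTh0 : (0 : ℝ) < Th := by rw [hTh]; positivity
  set K : ℕ → ℝ := fun i => ystar * E ^ i + μ * Tr * ∑ j ∈ Finset.range i, E ^ j with hK
  -- pointwise identification on each piece
  have hpt : ∀ i : ℕ, i < k → ∀ t ∈ Set.Ico ((i : ℝ) * Tr) (((i : ℝ) + 1) * Tr),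
      yph t = K i * Real.exp (-d * (t - (i : ℝ) * Tr)) := by
    intro i hik t ht
    obtain ⟨ht1, ht2⟩ := ht
    have hfloor : ⌊t / Tr⌋ = (i : ℤ) := by
      rw [Int.floor_eq_iff]
      constructor
      · push_cast
        rw [le_div_iff₀ hTr]
        linarith
      · push_cast
        rw [div_lt_iff₀ hTr]
        linarith
    have ht0 : 0 ≤ t := le_trans (by positivity) ht1
    have htTh : t < Th := by
      rw [hTh]
      have h1 : ((i : ℝ) + 1) ≤ (k : ℝ) := by exact_mod_cast hik
      nlinarith
    have hrTh : rmod Th t = t := by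
      have h0 : ⌊t / Th⌋ = 0 := by
        rw [Int.floor_eq_zero_iff]
        simp only [Set.mem_Ico]
        exact ⟨by positivity, by rw [div_lt_one hTh0]; exact htTh⟩
      unfold rmod
      rw [h0]
      simp
    have hrTr : rmod Tr t = t - (i : ℝ) * Tr := by
      unfold rmod
      rw [hfloor]
      push_cast
      ring
    have hnat : (⌊rmod Th t / Tr⌋).toNat = i := by
      rw [hrTh, hfloor]
      exact Int.toNat_natCast i
    have hsplit : Real.exp (-d * t) = E ^ i * Real.exp (-d * (t - (i : ℝ) * Tr)) := by
      rw [hE, ← Real.exp_nat_mul, ← Real.exp_add]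
      congr 1; ring
    rw [hyph t, hrTh, hrTr, hfloor, hsplit]
    simp only [Int.toNat_natCast, hterm, hK]
    ring
  -- almost-everywhere versions
  have hne : ∀ i : ℕ, ∀ᵐ t : ℝ ∂volume, t ≠ ((i : ℝ) + 1) * Tr := by
    intro i
    refine ae_iff.mpr ?_
    have : {t : ℝ | ¬t ≠ ((i : ℝ) + 1) * Tr} = {((i : ℝ) + 1) * Tr} := by
      ext x; simp
    rw [this]
    exact measure_singleton _
  have hab : ∀ i : ℕ, (i : ℝ) * Tr ≤ ((i : ℝ) + 1) * Tr := by
    intro i; nlinarith [Nat.cast_nonneg (α := ℝ) i]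
  have hint : ∀ i : ℕ, i < k →
      IntervalIntegrable yph volume ((i : ℝ) * Tr) (((i : ℝ) + 1) * Tr) := by
    intro i hik
    have hcont : Continuous fun t => K i * Real.exp (-d * (t - (i : ℝ) * Tr)) := by
      continuity
    refine (hcont.intervalIntegrable _ _).congr_ae ?_
    rw [Set.uIoc_of_le (hab i), Filter.EventuallyEq, MeasureTheory.ae_restrict_iff' measurableSet_Ioc]
    filter_upwards [hne i] with t htne htmem
    exact (hpt i hik t ⟨htmem.1.le, lt_of_le_of_ne htmem.2 htne⟩).symm
  have hval : ∀ i : ℕ, i < k →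
      ∫ t in ((i : ℝ) * Tr)..(((i : ℝ) + 1) * Tr), yph t = K i * ((1 - E) / d) := by
    intro i hik
    have hcongr : ∫ t in ((i : ℝ) * Tr)..(((i : ℝ) + 1) * Tr), yph t
        = ∫ t in ((i : ℝ) * Tr)..(((i : ℝ) + 1) * Tr),
            K i * Real.exp (-d * (t - (i : ℝ) * Tr)) := by
      apply intervalIntegral.integral_congr_ae
      rw [Set.uIoc_of_le (hab i)]
      filter_upwards [hne i] with t htne htmem
      exact hpt i hik t ⟨htmem.1.le, lt_of_le_of_ne htmem.2 htne⟩
    rw [hcongr, intervalIntegral.integral_const_mul]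
    have hcomp := intervalIntegral.integral_comp_sub_right
      (a := (i : ℝ) * Tr) (b := ((i : ℝ) + 1) * Tr)
      (fun u => Real.exp (-d * u)) ((i : ℝ) * Tr)
    rw [hcomp]
    have e1 : (i : ℝ) * Tr - (i : ℝ) * Tr = 0 := by ring
    have e2 : ((i : ℝ) + 1) * Tr - (i : ℝ) * Tr = Tr := by ring
    rw [e1, e2, int_exp_neg d 0 Tr hd.ne', mul_zero, Real.exp_zero]
  -- split the integral
  have hsplit := intervalIntegral.sum_integral_adjacent_intervals
    (f := yph) (μ := volume) (a := fun n : ℕ => (n : ℝ) * Tr) (n := k)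
    (by intro i hik; push_cast; exact hint i hik)
  simp only [Nat.cast_zero, zero_mul, Nat.cast_succ] at hsplit
  have htot : ∫ t in (0 : ℝ)..Th, yph t = ∑ i ∈ Finset.range k, K i * ((1 - E) / d) := by
    rw [hTh, ← hsplit]
    apply Finset.sum_congr rfl
    intro i hik
    rw [Finset.mem_range] at hik
    exact hval i hik
  rw [htot]
  -- evaluate the sum
  have hgeom : ∀ n : ℕ, ∑ j ∈ Finset.range n, E ^ j = (E ^ n - 1) / (E - 1) := fun n =>
    geom_sum_eq hE1.ne n
  have hsum2 : ∑ i ∈ Finset.range k, K i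
      = ystar * ((E ^ k - 1) / (E - 1))
        + μ * Tr * (((E ^ k - 1) / (E - 1) - (k : ℝ)) / (E - 1)) := by
    simp only [hK]
    rw [Finset.sum_add_distrib, ← Finset.mul_sum, hgeom]
    congr 1
    rw [← Finset.mul_sum]
    congr 1
    simp only [hgeom]
    rw [← Finset.sum_div, Finset.sum_sub_distrib, Finset.sum_const, Finset.card_range, hgeom]
    simp [nsmul_eq_mul]
  rw [← Finset.sum_mul, hsum2, hystar, hThk, hThdk, hTh]
  have hEk1 : E ^ k < 1 := pow_lt_one₀ hE0.le hE1 hk.ne'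
  have hEk0 : 0 < E ^ k := pow_pos hE0 k
  have hden : 1 - (1 - αy) * E ^ k ≠ 0 := by nlinarith [mul_pos hαy0 hEk0]
  have hE1' : E - 1 ≠ 0 := sub_ne_zero.mpr hE1.ne
  have hE1'' : (1 : ℝ) - E ≠ 0 := sub_ne_zero.mpr hE1.ne'
  have hden' : 1 - E ^ k * (1 - αy) ≠ 0 := by intro h; apply hden; linear_combination h
  field_simp
  ring
end

section
/- Let d > 0, T_h > 0, k a positive integer, T_r = k·T_h, α_y ∈ [0,1] and μ ≥ 0. Let y* = μ T_r / (1-(1-α_y)^k·e^{-d T_r}) and y_pr(t) = y*·e^{-d·(t mod T_r)}·(1-α_y)^{⌊(t mod T_r)/T_h⌋}, where (t mod P) denotes the representative of t modulo P in [0,P). Then ∫_0^{T_r} y_pr(t) dt = (μ T_r/d)·(1-e^{-d T_h})/(1-(1-α_y)·e^{-d T_h}). -/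
/-- The integral over one release period of the pest-free periodic predator
solution, when harvests are more frequent than releases (`T_r = k·T_h`). -/
theorem stmt_6 (d Th Tr αy μ : ℝ) (k : ℕ) (hk : 0 < k) (hd : 0 < d) (hTh : 0 < Th)
    (hTr : Tr = (k : ℝ) * Th) (hαy : αy ∈ Set.Icc (0 : ℝ) 1) (hμ : 0 ≤ μ)
    (ystar : ℝ)
    (hystar : ystar = μ * Tr / (1 - (1 - αy) ^ k * Real.exp (-d * Tr)))
    (ypr : ℝ → ℝ)
    (hypr : ∀ t : ℝ, ypr t = ystar * Real.exp (-d * rmod Tr t)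
      * (1 - αy) ^ (⌊rmod Tr t / Th⌋.toNat)) :
    ∫ t in (0 : ℝ)..Tr, ypr t
      = μ * Tr / d * (1 - Real.exp (-d * Th)) / (1 - (1 - αy) * Real.exp (-d * Th)) := by
  set E : ℝ := Real.exp (-d * Th) with hE
  set r : ℝ := (1 - αy) * E with hr
  have hTrpos : 0 < Tr := by rw [hTr]; positivity
  have hα0 : 0 ≤ 1 - αy := by linarith [hαy.2]
  have hα1 : 1 - αy ≤ 1 := by linarith [hαy.1]
  have hEpos : 0 < E := Real.exp_pos _
  have hE1 : E < 1 := by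
    rw [hE]; exact Real.exp_lt_one_iff.mpr (by nlinarith)
  have hr0 : 0 ≤ r := mul_nonneg hα0 hEpos.le
  have hr1 : r < 1 := lt_of_le_of_lt (by nlinarith : r ≤ E) hE1
  have hrk : r ^ k = (1 - αy) ^ k * Real.exp (-d * Tr) := by
    rw [hr, mul_pow, hE, ← Real.exp_nat_mul, hTr]
    ring_nf
  have hrk1 : r ^ k < 1 := pow_lt_one₀ hr0 hr1 hk.ne'
  have hys : ystar * (1 - r ^ k) = μ * Tr := by
    rw [hystar, ← hrk, div_mul_cancel₀]
    linarith
  -- pointwise description on each harvest interval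
  have hpt : ∀ i : ℕ, i < k → ∀ t ∈ Set.Ico ((i : ℝ) * Th) (((i : ℝ) + 1) * Th),
      ypr t = ystar * (1 - αy) ^ i * Real.exp (-d * t) := by
    intro i hi t ht
    obtain ⟨ht1, ht2⟩ := ht
    have h0t : 0 ≤ t := le_trans (by positivity) ht1
    have hik : (i : ℝ) + 1 ≤ (k : ℝ) := by exact_mod_cast hi
    have htTr : t < Tr := by
      rw [hTr]
      calc t < ((i : ℝ) + 1) * Th := ht2
        _ ≤ (k : ℝ) * Th := by nlinarith
    have hrm : rmod Tr t = t := by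
      unfold rmod
      have h0 : ⌊t / Tr⌋ = 0 := by
        rw [Int.floor_eq_zero_iff]
        constructor
        · exact div_nonneg h0t hTrpos.le
        · exact (div_lt_one hTrpos).mpr htTr
      simp [h0]
    have hfl : ⌊t / Th⌋ = (i : ℤ) := by
      rw [Int.floor_eq_iff]
      constructor
      · push_cast
        rw [le_div_iff₀ hTh]
        linarith
      · push_cast
        rw [div_lt_iff₀ hTh]
        linarith
    rw [hypr, hrm, hfl]
    simp only [Int.toNat_natCast]
    ring
  have hne : ∀ b : ℝ, ∀ᵐ t : ℝ, t ≠ b := by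
    intro b
    rw [MeasureTheory.ae_iff]
    simpa [not_not] using MeasureTheory.measure_singleton (μ := (MeasureTheory.volume : MeasureTheory.Measure ℝ)) b
  have hab : ∀ i : ℕ, (i : ℝ) * Th ≤ ((i : ℝ) + 1) * Th := by
    intro i; nlinarith
  -- interval integrability on each piece
  have hInt : ∀ i : ℕ, i < k →
      IntervalIntegrable ypr MeasureTheory.volume ((i : ℝ) * Th) (((i : ℝ) + 1) * Th) := by
    intro i hi
    have hg : IntervalIntegrable (fun t => ystar * (1 - αy) ^ i * Real.exp (-d * t))
        MeasureTheory.volume ((i : ℝ) * Th) (((i : ℝ) + 1) * Th) :=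
      (Continuous.intervalIntegrable (by fun_prop) _ _)
    apply hg.congr_ae
    filter_upwards [MeasureTheory.ae_restrict_mem measurableSet_uIoc,
      MeasureTheory.ae_restrict_of_ae (hne (((i : ℝ) + 1) * Th))] with t hmem htb
    rw [Set.uIoc_of_le (hab i)] at hmem
    exact (hpt i hi t ⟨le_of_lt hmem.1, lt_of_le_of_ne hmem.2 htb⟩).symm
  -- value of the integral on each piece
  have hpiece : ∀ i : ℕ, i < k →
      ∫ t in ((i : ℝ) * Th)..(((i : ℝ) + 1) * Th), ypr t
        = ystar * (1 - E) / d * r ^ i := by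
    intro i hi
    have hcongr : ∫ t in ((i : ℝ) * Th)..(((i : ℝ) + 1) * Th), ypr t
        = ∫ t in ((i : ℝ) * Th)..(((i : ℝ) + 1) * Th),
            ystar * (1 - αy) ^ i * Real.exp (-d * t) := by
      apply intervalIntegral.integral_congr_ae
      filter_upwards [hne (((i : ℝ) + 1) * Th)] with t htb hmem
      rw [Set.uIoc_of_le (hab i)] at hmem
      exact hpt i hi t ⟨le_of_lt hmem.1, lt_of_le_of_ne hmem.2 htb⟩
    rw [hcongr, intervalIntegral.integral_const_mul]
    have hexp : ∫ t in ((i : ℝ) * Th)..(((i : ℝ) + 1) * Th), Real.exp (-d * t)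
        = (Real.exp (-d * ((i : ℝ) * Th)) - Real.exp (-d * (((i : ℝ) + 1) * Th))) / d := by
      have : ∀ t : ℝ, HasDerivAt (fun s => -Real.exp (-d * s) / d) (Real.exp (-d * t)) t := by
        intro t
        have h1 : HasDerivAt (fun s : ℝ => -d * s) (-d) t := by
          simpa using (hasDerivAt_id t).const_mul (-d)
        have h2 := (h1.exp).neg.div_const d
        convert h2 using 1 <;> first | rfl | skip
        field_simp
      rw [intervalIntegral.integral_eq_sub_of_hasDerivAt (fun t _ => this t)
        ((Continuous.intervalIntegrable (by fun_prop) _ _))]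
      ring
    rw [hexp]
    have e1 : Real.exp (-d * ((i : ℝ) * Th)) = E ^ i := by
      rw [hE, ← Real.exp_nat_mul]; ring_nf
    have e2 : Real.exp (-d * (((i : ℝ) + 1) * Th)) = E ^ i * E := by
      rw [hE, ← Real.exp_nat_mul, ← Real.exp_add]; ring_nf
    rw [e1, e2, hr, mul_pow]
    field_simp
  -- assemble
  have hsum := intervalIntegral.sum_integral_adjacent_intervals
    (a := fun i : ℕ => (i : ℝ) * Th) (n := k)
    (fun i hi => by push_cast; exact hInt i hi)
  simp only [Nat.cast_zero, zero_mul] at hsum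
  rw [hTr, ← hsum]
  have : ∀ i ∈ Finset.range k,
      ∫ t in ((i : ℝ) * Th)..(((i : ℕ) + 1 : ℕ) : ℝ) * Th, ypr t
        = ystar * (1 - E) / d * r ^ i := by
    intro i hi
    push_cast
    exact hpiece i (Finset.mem_range.mp hi)
  rw [Finset.sum_congr rfl this, ← Finset.mul_sum, geom_sum_eq hr1.ne]
  have hd' : d ≠ 0 := hd.ne'
  have hr1' : r - 1 ≠ 0 := by linarith
  have hr1'' : 1 - r ≠ 0 := by linarith
  rw [← hTr, ← hys]
  field_simp
  ring
end

section
/- Let d > 0, T_h > 0, α_y ∈ (0,1] and let k be a positive integer. Then ( α_y·(1-e^{-d T_h}) / (1-(1-α_y)·e^{-d T_h}) )·( e^{-d T_h/k} / (k·(1-e^{-d T_h/k})) ) < 1. -/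
/-- Positivity of the denominator in the minimal-budget function `μ_h`. -/
theorem stmt_7 (d Th αy : ℝ) (k : ℕ) (hk : 0 < k) (hd : 0 < d) (hTh : 0 < Th)
    (hαy : αy ∈ Set.Ioc (0 : ℝ) 1) :
    αy * (1 - Real.exp (-d * Th)) / (1 - (1 - αy) * Real.exp (-d * Th))
      * (Real.exp (-d * Th / k) / ((k : ℝ) * (1 - Real.exp (-d * Th / k)))) < 1 := by
  obtain ⟨hαy0, hαy1⟩ := hαy
  have hk' : (0:ℝ) < k := Nat.cast_pos.mpr hk
  set u := Real.exp (-d * Th / k) with hu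
  have hu0 : 0 < u := Real.exp_pos _
  have hu1 : u < 1 := by
    rw [hu, Real.exp_lt_one_iff]
    have h1 : 0 < d * Th / k := by positivity
    have h2 : -d * Th / (k:ℝ) = -(d * Th / k) := by ring
    linarith
  have hE : Real.exp (-d * Th) = u ^ k := by
    rw [hu, ← Real.exp_nat_mul]
    congr 1
    field_simp
  have hEk0 : 0 < u ^ k := pow_pos hu0 k
  have hEk1 : u ^ k < 1 := pow_lt_one₀ hu0.le hu1 hk.ne'
  have hbern : 1 - u ^ k ≤ (k : ℝ) * (1 - u) := by
    have hb := one_add_mul_le_pow (by linarith : (-2:ℝ) ≤ u - 1) k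
    rw [show (1:ℝ) + (u - 1) = u by ring] at hb
    linarith
  have hD1 : 0 < 1 - (1 - αy) * u ^ k := by nlinarith
  have hD2 : 0 < (k:ℝ) * (1 - u) := by
    apply mul_pos hk'
    linarith
  rw [hE, div_mul_div_comm, div_lt_one (mul_pos hD1 hD2)]
  have h1 : αy * u * (1 - u ^ k) ≤ αy * u * ((k:ℝ) * (1 - u)) :=
    mul_le_mul_of_nonneg_left hbern (by positivity)
  have h2 : αy * u < 1 - (1 - αy) * u ^ k := by nlinarith
  have h3 : αy * u * ((k:ℝ) * (1 - u)) < (1 - (1 - αy) * u ^ k) * ((k:ℝ) * (1 - u)) :=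
    mul_lt_mul_of_pos_right h2 hD2
  nlinarith [h1, h3]
end

section
/- Let a > 0. The function φ : (0,∞) → ℝ defined by φ(k) = e^{-a/k} / (k·(1-e^{-a/k})) is strictly increasing: for 0 < k_1 < k_2 one has φ(k_1) < φ(k_2). -/
open Real

/-- `(e^x - 1)/x` is strictly increasing on `(0,∞)`. -/
lemma aux_mono : StrictMonoOn (fun x : ℝ => (Real.exp x - 1) / x) (Set.Ioi 0) := by
  apply strictMonoOn_of_deriv_pos (convex_Ioi 0)
  · apply ContinuousOn.div
    · exact (Real.continuous_exp.sub continuous_const).continuousOn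
    · exact continuousOn_id
    · intro x hx; exact ne_of_gt hx
  · intro x hx
    rw [interior_Ioi] at hx
    have hx0 : (0:ℝ) < x := hx
    have hd : HasDerivAt (fun x : ℝ => (Real.exp x - 1) / x)
        ((Real.exp x * x - (Real.exp x - 1) * 1) / x ^ 2) x := by
      exact (((Real.hasDerivAt_exp x).sub_const 1).div (hasDerivAt_id x) (ne_of_gt hx0))
    rw [hd.deriv]
    have h1 : -x + 1 < Real.exp (-x) := Real.add_one_lt_exp (by linarith : -x ≠ 0)
    have h2 : Real.exp (-x) * Real.exp x = 1 := by
      rw [← Real.exp_add]; simp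
    have h3 : (0:ℝ) < Real.exp x := Real.exp_pos x
    have hnum : 0 < Real.exp x * x - (Real.exp x - 1) * 1 := by nlinarith
    positivity

lemma aux_f (a : ℝ) (ha : 0 < a) (k : ℝ) (hk : 0 < k) :
    Real.exp (-a / k) / (k * (1 - Real.exp (-a / k)))
      = 1 / (k * (Real.exp (a / k) - 1)) := by
  have he : Real.exp (-a / k) = (Real.exp (a / k))⁻¹ := by
    rw [← Real.exp_neg]; ring_nf
  have h1 : (1:ℝ) < Real.exp (a / k) := by
    have : (0:ℝ) < a / k := by positivity
    linarith [Real.add_one_lt_exp (ne_of_gt this)]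
  rw [he]
  have h0 : Real.exp (a / k) ≠ 0 := (Real.exp_pos _).ne'
  field_simp

/-- The function `φ(k) = e^{-a/k} / (k·(1 - e^{-a/k}))` is strictly increasing
on `(0, ∞)` for every `a > 0`. -/
theorem stmt_10 (a : ℝ) (ha : 0 < a) (k₁ k₂ : ℝ) (hk₁ : 0 < k₁) (hk : k₁ < k₂) :
    Real.exp (-a / k₁) / (k₁ * (1 - Real.exp (-a / k₁)))
      < Real.exp (-a / k₂) / (k₂ * (1 - Real.exp (-a / k₂))) := by
  have hk₂ : 0 < k₂ := hk₁.trans hk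
  rw [aux_f a ha k₁ hk₁, aux_f a ha k₂ hk₂]
  have hst : a / k₂ < a / k₁ := by
    apply div_lt_div_of_pos_left ha hk₁ hk
  have hs : (0:ℝ) < a / k₂ := by positivity
  have ht : (0:ℝ) < a / k₁ := by positivity
  have := aux_mono hs (Set.mem_Ioi.mpr ht) hst
  simp only at this
  -- this : (exp (a/k₂) - 1)/(a/k₂) < (exp (a/k₁) - 1)/(a/k₁)
  have h1 : (1:ℝ) < Real.exp (a / k₁) := by
    linarith [Real.add_one_lt_exp (ne_of_gt ht)]
  have h2 : (1:ℝ) < Real.exp (a / k₂) := by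
    linarith [Real.add_one_lt_exp (ne_of_gt hs)]
  have hd₂ : 0 < k₂ * (Real.exp (a / k₂) - 1) := by
    apply mul_pos hk₂; linarith
  have hd₁ : 0 < k₁ * (Real.exp (a / k₁) - 1) := by
    apply mul_pos hk₁; linarith
  apply one_div_lt_one_div_of_lt hd₂
  -- k₂ (e^{a/k₂} - 1) < k₁ (e^{a/k₁} - 1)
  have key : k₂ * (Real.exp (a / k₂) - 1) * a⁻¹ < k₁ * (Real.exp (a / k₁) - 1) * a⁻¹ := by
    have e1 : k₂ * (Real.exp (a / k₂) - 1) * a⁻¹ = (Real.exp (a / k₂) - 1) / (a / k₂) := by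
      field_simp
    have e2 : k₁ * (Real.exp (a / k₁) - 1) * a⁻¹ = (Real.exp (a / k₁) - 1) / (a / k₁) := by
      field_simp
    rw [e1, e2]; exact this
  have := mul_lt_mul_of_pos_right key ha
  calc k₂ * (Real.exp (a / k₂) - 1)
      = k₂ * (Real.exp (a / k₂) - 1) * a⁻¹ * a := by field_simp
    _ < k₁ * (Real.exp (a / k₁) - 1) * a⁻¹ * a := this
    _ = k₁ * (Real.exp (a / k₁) - 1) := by field_simp
end

section
/- Let d > 0, T_r > 0, k a positive integer, T_h = k·T_r, α_x ∈ (0,1), α_y ∈ (0,1], μ ≥ 0, and let a > 0, b > 0 (playing the roles of f'(0) and g'(0)). Let y_ph be defined from y* = μ T_r·( ((1-e^{-d T_h})/(1-e^{-d T_r}))·(1-α_y) + α_y ) / (1-(1-α_y)·e^{-d T_h}) by y_ph(t) = y*·e^{-d·(t mod T_h)} + μ T_r·e^{-d·(t mod T_r)}·Σ_{j=0}^{⌊(t mod T_h)/T_r⌋ - 1} e^{-j d T_r}. Then (1-α_x)·exp( a·T_h - b·∫_0^{T_h} y_ph(t) dt ) < 1 if and only if μ > d·( a/b + ln(1-α_x)/(b·T_h)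 ) / ( 1 - ( α_y·(1-e^{-d T_h}) / (1-(1-α_y)·e^{-d T_h}) )·( e^{-d T_h/k} / (k·(1-e^{-d T_h/k})) ) ). -/
open MeasureTheory intervalIntegral

private lemma myint (d : ℝ) (hd : d ≠ 0) (c A B : ℝ) :
    ∫ t in A..B, Real.exp (-d*(t-c)) = (Real.exp (-d*(A-c)) - Real.exp (-d*(B-c)))/d := by
  have h : ∀ t : ℝ, HasDerivAt (fun t => -(Real.exp (-d*(t-c)))/d) (Real.exp (-d*(t-c))) t := by
    intro t
    have h1 : HasDerivAt (fun t : ℝ => -d*(t-c)) (-d) t := by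
      simpa using ((hasDerivAt_id t).sub_const c).const_mul (-d)
    have h2 := ((h1.exp).neg).div_const d
    refine h2.congr_deriv ?_
    field_simp
  rw [intervalIntegral.integral_eq_sub_of_hasDerivAt (fun t _ => h t)
    ((Real.continuous_exp.comp (by continuity)).intervalIntegrable A B)]
  ring

private lemma ae_ne' (x : ℝ) : ∀ᵐ t : ℝ, t ≠ x := by
  rw [MeasureTheory.ae_iff]
  simpa using measure_singleton (α := ℝ) x

set_option maxHeartbeats 1600000 in
/-- The local stability condition `|B₁₁| < 1` over one harvest period
(`T_h = k·T_r`, releases more frequent than harvests) is equivalent to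
`μ > μ_h(a/b, b)` where `a = f'(0)` and `b = g'(0)`. -/
theorem stmt_12 (d Tr Th αx αy μ a b : ℝ) (k : ℕ) (hk : 0 < k) (hd : 0 < d) (hTr : 0 < Tr)
    (hTh : Th = (k : ℝ) * Tr) (hαx : αx ∈ Set.Ioo (0 : ℝ) 1) (hαy : αy ∈ Set.Ioc (0 : ℝ) 1)
    (hμ : 0 ≤ μ) (ha : 0 < a) (hb : 0 < b)
    (ystar : ℝ)
    (hystar : ystar = μ * Tr * ((1 - Real.exp (-d * Th)) / (1 - Real.exp (-d * Tr)) * (1 - αy)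
      + αy) / (1 - (1 - αy) * Real.exp (-d * Th)))
    (yph : ℝ → ℝ)
    (hyph : ∀ t : ℝ, yph t = ystar * Real.exp (-d * rmod Th t)
      + μ * Tr * Real.exp (-d * rmod Tr t)
        * ∑ j ∈ Finset.range (⌊rmod Th t / Tr⌋.toNat), Real.exp (-(j : ℝ) * d * Tr)) :
    (1 - αx) * Real.exp (a * Th - b * ∫ t in (0 : ℝ)..Th, yph t) < 1 ↔
      μ > d * (a / b + Real.log (1 - αx) / (b * Th))
        / (1 - αy * (1 - Real.exp (-d * Th)) / (1 - (1 - αy) * Real.exp (-d * Th))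
          * (Real.exp (-d * Th / k) / ((k : ℝ) * (1 - Real.exp (-d * Th / k))))) := by
  set q : ℝ := Real.exp (-d * Tr) with hq
  have hk' : (0:ℝ) < k := by exact_mod_cast hk
  have hTh0 : 0 < Th := by rw [hTh]; positivity
  have hq0 : 0 < q := Real.exp_pos _
  have hq1 : q < 1 := Real.exp_lt_one_iff.mpr (by nlinarith)
  have hqne1 : q ≠ 1 := ne_of_lt hq1
  have hqk : Real.exp (-d * Th) = q^k := by
    rw [hq, ← Real.exp_nat_mul, hTh]; ring_nf
  have hqi : ∀ i : ℕ, Real.exp (-d * ((i:ℝ) * Tr)) = q^i := by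
    intro i
    rw [hq, ← Real.exp_nat_mul]; ring_nf
  have hqk1 : q^k < 1 := pow_lt_one₀ hq0.le hq1 hk.ne'
  have hqk0 : 0 < q^k := pow_pos hq0 k
  have hD : 0 < 1 - (1 - αy) * q^k := by nlinarith [hαy.1, hαy.2]
  -- the sum rewrite
  have hsum : ∀ n : ℕ, ∑ j ∈ Finset.range n, Real.exp (-(j : ℝ) * d * Tr)
      = (q^n - 1)/(q - 1) := by
    intro n
    rw [← geom_sum_eq hqne1]
    refine Finset.sum_congr rfl fun j _ => ?_
    rw [hq, ← Real.exp_nat_mul]; ring_nf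
  -- the per-piece nice representative
  set g : ℕ → ℝ → ℝ := fun i t =>
    ystar * Real.exp (-d*(t-0)) + (μ * Tr * ((q^i - 1)/(q - 1))) * Real.exp (-d*(t - (i:ℝ)*Tr))
    with hgdef
  have hcong : ∀ i < k, ∀ᵐ t : ℝ, t ∈ Set.uIoc ((i:ℝ)*Tr) (((i:ℝ)+1)*Tr) → yph t = g i t := by
    intro i hi
    have hik : (i:ℝ) + 1 ≤ (k:ℝ) := by exact_mod_cast Nat.succ_le_of_lt hi
    filter_upwards [ae_ne' (((i:ℝ)+1)*Tr)] with t hne ht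
    rw [Set.uIoc_of_le (by nlinarith)] at ht
    have ht1 : (i:ℝ)*Tr < t := ht.1
    have ht2 : t < ((i:ℝ)+1)*Tr := lt_of_le_of_ne ht.2 hne
    have ht0 : 0 < t := lt_of_le_of_lt (by positivity) ht1
    have htTh : t < Th := by rw [hTh]; nlinarith
    have hfl1 : ⌊t/Th⌋ = 0 := by
      rw [Int.floor_eq_zero_iff]
      constructor
      · positivity
      · rw [div_lt_one hTh0]; exact htTh
    have hrTh : rmod Th t = t := by rw [rmod, hfl1]; simp
    have hfl2 : ⌊t/Tr⌋ = (i:ℤ) := by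
      rw [Int.floor_eq_iff]
      constructor
      · push_cast; rw [le_div_iff₀ hTr]; nlinarith
      · push_cast; rw [div_lt_iff₀ hTr]; nlinarith
    have hrTr : rmod Tr t = t - (i:ℝ)*Tr := by
      rw [rmod, hfl2]; push_cast; ring
    rw [hyph, hrTh, hrTr, hfl2]
    simp only [Int.toNat_natCast, hsum]
    rw [hgdef]
    simp only [sub_zero]
    ring
  have hgint : ∀ i : ℕ, ∀ A B : ℝ, IntervalIntegrable (g i) volume A B := by
    intro i A B
    apply Continuous.intervalIntegrable
    rw [hgdef]
    have c1 : Continuous fun t : ℝ => Real.exp (-d*(t-0)) :=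
      Real.continuous_exp.comp (by fun_prop)
    have c2 : Continuous fun t : ℝ => Real.exp (-d*(t-(i:ℝ)*Tr)) :=
      Real.continuous_exp.comp (by fun_prop)
    exact (continuous_const.mul c1).add (continuous_const.mul c2)
  have hint : ∀ i < k, IntervalIntegrable yph volume ((i:ℝ)*Tr) (((i:ℝ)+1)*Tr) := by
    intro i hi
    refine (hgint i _ _).congr_ae ?_
    exact (ae_restrict_iff' measurableSet_uIoc).mpr
      ((hcong i hi).mono fun t h ht => (h ht).symm)
  have piece : ∀ i < k, ∫ t in ((i:ℝ)*Tr)..(((i:ℝ)+1)*Tr), yph t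
      = (ystar * q^i + μ*Tr*((q^i - 1)/(q - 1))) * ((1-q)/d) := by
    intro i hi
    rw [intervalIntegral.integral_congr_ae (hcong i hi), hgdef]
    beta_reduce
    have c1 : Continuous fun t : ℝ => Real.exp (-d*(t-0)) :=
      Real.continuous_exp.comp (by fun_prop)
    have c2 : Continuous fun t : ℝ => Real.exp (-d*(t-(i:ℝ)*Tr)) :=
      Real.continuous_exp.comp (by fun_prop)
    rw [intervalIntegral.integral_add (f := fun t => ystar * Real.exp (-d*(t-0)))
      (g := fun t => (μ * Tr * ((q^i - 1)/(q - 1))) * Real.exp (-d*(t - (i:ℝ)*Tr)))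
      ((continuous_const.mul c1).intervalIntegrable _ _)
      ((continuous_const.mul c2).intervalIntegrable _ _),
      intervalIntegral.integral_const_mul, intervalIntegral.integral_const_mul,
      myint d hd.ne' 0, myint d hd.ne' ((i:ℝ)*Tr)]
    have e1 : Real.exp (-d*((i:ℝ)*Tr - 0)) = q^i := by rw [sub_zero]; exact hqi i
    have e2 : Real.exp (-d*(((i:ℝ)+1)*Tr - 0)) = q^(i+1) := by
      rw [sub_zero, show ((i:ℝ)+1)*Tr = ((i+1:ℕ):ℝ)*Tr by push_cast; ring]
      exact hqi (i+1)
    have e3 : Real.exp (-d*((i:ℝ)*Tr - (i:ℝ)*Tr)) = 1 := by simp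
    have e4 : Real.exp (-d*(((i:ℝ)+1)*Tr - (i:ℝ)*Tr)) = q := by
      rw [show ((i:ℝ)+1)*Tr - (i:ℝ)*Tr = Tr by ring]
    rw [e1, e2, e3, e4, pow_succ]
    field_simp [sub_ne_zero.mpr hqne1]
  have hadj := intervalIntegral.sum_integral_adjacent_intervals (μ := volume) (f := yph)
    (a := fun i : ℕ => (i:ℝ)*Tr) (n := k)
    (by intro i hi
        have := hint i hi
        convert this using 2
        push_cast; ring)
  simp only [Nat.cast_zero, zero_mul] at hadj
  have hsplit : ∫ t in (0:ℝ)..Th, yph t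
      = ∑ i ∈ Finset.range k, ((ystar * q^i + μ*Tr*((q^i - 1)/(q - 1))) * ((1-q)/d)) := by
    rw [hTh, ← hadj]
    refine Finset.sum_congr rfl fun i hi => ?_
    rw [show (((i+1:ℕ)):ℝ)*Tr = ((i:ℝ)+1)*Tr by push_cast; ring]
    exact piece i (Finset.mem_range.mp hi)
  have hq1' : q - 1 ≠ 0 := sub_ne_zero.mpr hqne1
  have htot : ∫ t in (0:ℝ)..Th, yph t
      = (ystar * ((q^k - 1)/(q - 1)) + μ*Tr*((q^k - 1)/(q - 1) - k)/(q - 1)) * ((1-q)/d) := by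
    rw [hsplit, ← Finset.sum_mul]
    congr 1
    rw [Finset.sum_add_distrib, ← Finset.mul_sum, geom_sum_eq hqne1]
    congr 1
    rw [Finset.sum_congr rfl (fun i (_ : i ∈ Finset.range k) =>
      show μ*Tr*((q^i - 1)/(q - 1)) = (μ*Tr/(q-1))*q^i - μ*Tr/(q-1) by field_simp <;> ring),
      Finset.sum_sub_distrib, ← Finset.mul_sum, geom_sum_eq hqne1, Finset.sum_const,
      Finset.card_range]
    simp only [nsmul_eq_mul]
    field_simp
  -- rewrite the exponentials in the goal
  have e5 : Real.exp (-d * Th / (k:ℝ)) = q := by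
    rw [show -d * Th / (k:ℝ) = -d*Tr by rw [hTh]; field_simp <;> ring]
  rw [hqk] at hystar
  rw [hqk, e5]
  set S : ℝ := αy * (1 - q^k) / (1 - (1-αy) * q^k) * (q / ((k:ℝ) * (1 - q))) with hS
  have hI : (ystar * ((q^k - 1)/(q - 1)) + μ*Tr*((q^k - 1)/(q - 1) - k)/(q - 1)) * ((1-q)/d)
      = μ * Th * (1 - S)/d := by
    rw [hystar, hTh, hS]
    have h1 : q - 1 ≠ 0 := sub_ne_zero.mpr hqne1
    have h2 : (1:ℝ) - q ≠ 0 := sub_ne_zero.mpr hqne1.symm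
    have h3 : (1:ℝ) - (1-αy)*q^k ≠ 0 := hD.ne'
    have h4 : (k:ℝ) ≠ 0 := hk'.ne'
    have h3' : (1:ℝ) - q^k*(1-αy) ≠ 0 := by rw [mul_comm]; exact h3
    field_simp
    ring
  rw [htot, hI]
  -- positivity of 1 - S
  have f1 : 1 - q^k ≤ (k:ℝ)*(1-q) := by
    have bern := one_add_mul_le_pow (show (-2:ℝ) ≤ q - 1 by nlinarith) k
    rw [show (1:ℝ) + (q-1) = q by ring] at bern
    nlinarith
  have f2 : q^k ≤ q := by
    simpa using pow_le_pow_of_le_one hq0.le hq1.le hk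
  have hkq : (0:ℝ) < (k:ℝ)*(1-q) := by nlinarith
  have hnum : αy*(1-q^k)*q < (1-(1-αy)*q^k)*((k:ℝ)*(1-q)) := by
    have g1 : αy*q*(1-q^k) ≤ αy*q*((k:ℝ)*(1-q)) :=
      mul_le_mul_of_nonneg_left f1 (mul_nonneg hαy.1.le hq0.le)
    have g2 : αy*q < 1-(1-αy)*q^k := by nlinarith [hαy.1, hαy.2]
    nlinarith [mul_lt_mul_of_pos_right g2 hkq]
  have h1S : 0 < 1 - S := by
    have hSeq : S = αy*(1-q^k)*q / ((1-(1-αy)*q^k)*((k:ℝ)*(1-q))) := by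
      rw [hS, div_mul_div_comm]
    have := (div_lt_one (by positivity)).mpr hnum
    rw [hSeq]; linarith
  have hax1 : 0 < 1 - αx := by linarith [hαx.2]
  have step1 : (1-αx) * Real.exp (a * Th - b * (μ * Th * (1 - S)/d)) < 1
      ↔ a * Th - b * (μ * Th * (1 - S)/d) < -Real.log (1-αx) := by
    rw [mul_comm, ← lt_div_iff₀ hax1, ← Real.lt_log_iff_exp_lt (by positivity), one_div,
      Real.log_inv]
  have key : a*Th - b*(μ*Th*(1-S)/d) + Real.log (1-αx)
      = (b*Th/d) * (d*(a/b + Real.log (1-αx)/(b*Th)) - μ*(1-S)) := by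
    field_simp
    ring
  have hc : 0 < b*Th/d := by positivity
  rw [step1, gt_iff_lt, div_lt_iff₀ h1S]
  constructor <;> intro h <;> nlinarith [key, hc]
end

section
/- Let d > 0, T_h > 0, k a positive integer, T_r = k·T_h, α_x ∈ (0,1), α_y ∈ [0,1], μ ≥ 0, and let a > 0, b > 0 (playing the roles of f'(0) and g'(0)). Let y_pr be defined from y* = μ T_r / (1-(1-α_y)^k·e^{-d T_r}) by y_pr(t) = y*·e^{-d·(t mod T_r)}·(1-α_y)^{⌊(t mod T_r)/T_h⌋}. Then (1-α_x)^k·exp( a·T_r - b·∫_0^{T_r} y_pr(t) dt ) < 1 if and only if μ > d·( a/b + ln(1-α_x)/(b·T_h) )·( 1-(1-α_y)·e^{-d T_h} )/( 1-e^{-d T_h} ). -/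
open MeasureTheory intervalIntegral in
lemma exp_integral' (d : ℝ) (hd : 0 < d) (x y : ℝ) :
    ∫ t in x..y, Real.exp (-d * t) = (Real.exp (-d*x) - Real.exp (-d*y)) / d := by
  have h : ∀ t : ℝ, HasDerivAt (fun s => -(Real.exp (-d*s)/d)) (Real.exp (-d*t)) t := by
    intro t
    have h1 : HasDerivAt (fun s : ℝ => -d*s) (-d) t := by
      simpa using (hasDerivAt_id t).const_mul (-d)
    have h2 := (h1.exp.div_const d).neg
    convert h2 using 1
    all_goals first | rfl | field_simp
  rw [intervalIntegral.integral_eq_sub_of_hasDerivAt (fun t _ => h t)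
    ((Real.continuous_exp.comp (continuous_const.mul continuous_id)).intervalIntegrable x y)]
  ring

open MeasureTheory intervalIntegral in
set_option maxHeartbeats 1000000 in
/-- The local stability condition `|B₁₁| < 1` over one release period
(`T_r = k·T_h`, harvests more frequent than releases) is equivalent to
`μ > μ_r(a/b, b)` where `a = f'(0)` and `b = g'(0)`. -/
theorem stmt_13 (d Th Tr αx αy μ a b : ℝ) (k : ℕ) (hk : 0 < k) (hd : 0 < d) (hTh : 0 < Th)
    (hTr : Tr = (k : ℝ) * Th) (hαx : αx ∈ Set.Ioo (0 : ℝ) 1) (hαy : αy ∈ Set.Icc (0 : ℝ) 1)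
    (hμ : 0 ≤ μ) (ha : 0 < a) (hb : 0 < b)
    (ystar : ℝ)
    (hystar : ystar = μ * Tr / (1 - (1 - αy) ^ k * Real.exp (-d * Tr)))
    (ypr : ℝ → ℝ)
    (hypr : ∀ t : ℝ, ypr t = ystar * Real.exp (-d * rmod Tr t)
      * (1 - αy) ^ (⌊rmod Tr t / Th⌋.toNat)) :
    (1 - αx) ^ k * Real.exp (a * Tr - b * ∫ t in (0 : ℝ)..Tr, ypr t) < 1 ↔
      μ > d * (a / b + Real.log (1 - αx) / (b * Th))
        * (1 - (1 - αy) * Real.exp (-d * Th)) / (1 - Real.exp (-d * Th)) := by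
  obtain ⟨hαx0, hαx1⟩ := hαx
  obtain ⟨hαy0, hαy1⟩ := hαy
  set E : ℝ := Real.exp (-d*Th) with hE
  set q : ℝ := 1 - αy with hq
  clear_value E q
  have hE0 : 0 < E := by rw [hE]; positivity
  have hE1 : E < 1 := by
    rw [hE, Real.exp_lt_one_iff]; nlinarith
  have hq0 : 0 ≤ q := by simp [hq]; linarith
  have hq1 : q ≤ 1 := by simp [hq]; linarith
  have hqE : q * E < 1 := by nlinarith
  have hkR : (0:ℝ) < (k:ℝ) := by exact_mod_cast hk
  have hTr0 : 0 < Tr := by rw [hTr]; positivity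
  have hETr : Real.exp (-d*Tr) = E ^ k := by
    rw [hE, ← Real.exp_nat_mul]; congr 1; rw [hTr]; ring
  have hden : 0 < 1 - q ^ k * Real.exp (-d*Tr) := by
    rw [hETr]
    have h1 : q ^ k * E ^ k ≤ 1 * E ^ k := by
      apply mul_le_mul_of_nonneg_right (pow_le_one₀ hq0 hq1) (by positivity)
    have h2 : E ^ k < 1 := pow_lt_one₀ (le_of_lt hE0) hE1 (Nat.pos_iff_ne_zero.mp hk)
    nlinarith
  -- pointwise value on open subintervals
  have haej : ∀ j, j < k → ∀ t ∈ Set.Ioo ((j:ℝ)*Th) (((j:ℝ)+1)*Th),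
      ypr t = ystar * q^j * Real.exp (-d*t) := by
    intro j hj t ⟨ht1, ht2⟩
    have hjTh : (0:ℝ) ≤ (j:ℝ)*Th := by positivity
    have h0t : 0 < t := lt_of_le_of_lt hjTh ht1
    have hjk : (j:ℝ) + 1 ≤ (k:ℝ) := by exact_mod_cast hj
    have htTr : t < Tr := by rw [hTr]; nlinarith
    have hfl0 : ⌊t/Tr⌋ = 0 := by
      rw [Int.floor_eq_zero_iff]
      constructor
      · positivity
      · rw [div_lt_one hTr0]; exact htTr
    have hrm : rmod Tr t = t := by simp [rmod, hfl0]
    have hflj : ⌊t/Th⌋ = (j:ℤ) := by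
      rw [Int.floor_eq_iff]
      constructor
      · push_cast; rw [le_div_iff₀ hTh]; linarith
      · push_cast; rw [div_lt_iff₀ hTh]; linarith
    rw [hypr, hrm, hflj, Int.toNat_natCast]
    ring
  have haeae : ∀ j, j < k → ∀ᵐ t ∂(volume : Measure ℝ),
      t ∈ Set.uIoc ((j:ℝ)*Th) (((j:ℝ)+1)*Th) → ypr t = ystar * q^j * Real.exp (-d*t) := by
    intro j hj
    have h0 : ({((j:ℝ)+1)*Th} : Set ℝ)ᶜ ∈ ae (volume : Measure ℝ) :=
      compl_mem_ae_iff.2 (Real.volume_singleton)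
    filter_upwards [h0] with t ht hmem
    rw [Set.uIoc_of_le (by nlinarith)] at hmem
    exact haej j hj t ⟨hmem.1, lt_of_le_of_ne hmem.2 ht⟩
  have hcont : ∀ j : ℕ, Continuous (fun t : ℝ => ystar * q^j * Real.exp (-d*t)) := by
    intro j
    exact continuous_const.mul (Real.continuous_exp.comp (continuous_const.mul continuous_id))
  have hintg : ∀ j, j < k → IntervalIntegrable ypr volume ((j:ℝ)*Th) (((j:ℝ)+1)*Th) := by
    intro j hj
    have hle : (j:ℝ)*Th ≤ ((j:ℝ)+1)*Th := by nlinarith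
    rw [intervalIntegrable_iff_integrableOn_Ioc_of_le hle]
    have hc : IntegrableOn (fun t : ℝ => ystar * q^j * Real.exp (-d*t))
        (Set.Ioc ((j:ℝ)*Th) (((j:ℝ)+1)*Th)) volume := by
      apply Continuous.integrableOn_Ioc (hcont j)
    apply hc.congr_fun_ae
    rw [Filter.EventuallyEq]
    rw [ae_restrict_iff' measurableSet_Ioc]
    filter_upwards [haeae j hj] with t ht hmem
    exact (ht (by rwa [Set.uIoc_of_le (by nlinarith)])).symm
  have hpiece : ∀ j, j < k → (∫ t in ((j:ℝ)*Th)..(((j:ℝ)+1)*Th), ypr t)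
      = (ystar * (1-E)/d) * (q*E)^j := by
    intro j hj
    rw [intervalIntegral.integral_congr_ae (haeae j hj), intervalIntegral.integral_const_mul,
      exp_integral' d hd]
    have e1 : Real.exp (-d*((j:ℝ)*Th)) = E^j := by
      rw [hE, ← Real.exp_nat_mul]; congr 1; ring
    have e2 : Real.exp (-d*(((j:ℝ)+1)*Th)) = E^(j+1) := by
      rw [hE, ← Real.exp_nat_mul]; push_cast; congr 1; ring
    rw [e1, e2, mul_pow]
    field_simp
    ring
  have hsum := intervalIntegral.sum_integral_adjacent_intervals
    (a := fun i : ℕ => (i:ℝ)*Th) (f := ypr) (μ := volume) (n := k)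
    (by intro i hi
        have : ((i:ℕ)+1 : ℕ) = i + 1 := rfl
        push_cast
        exact hintg i hi)
  have hint : (∫ t in (0:ℝ)..Tr, ypr t) = μ * Tr * (1-E)/(d*(1-q*E)) := by
    have hz : ((0:ℕ):ℝ)*Th = 0 := by simp
    rw [hTr]
    rw [show (∫ t in (0:ℝ)..((k:ℝ)*Th), ypr t)
        = ∫ t in (((0:ℕ):ℝ)*Th)..(((k:ℕ):ℝ)*Th), ypr t by rw [hz]]
    rw [← hsum]
    have : ∀ j ∈ Finset.range k,
        (∫ t in (((j:ℕ):ℝ)*Th)..((((j+1:ℕ)):ℝ)*Th), ypr t) = (ystar * (1-E)/d) * (q*E)^j := by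
      intro j hj
      rw [show (((j+1:ℕ)):ℝ)*Th = ((j:ℝ)+1)*Th by push_cast; ring]
      exact hpiece j (Finset.mem_range.mp hj)
    rw [Finset.sum_congr rfl this, ← Finset.mul_sum, geom_sum_eq hqE.ne]
    rw [hystar, hETr, mul_pow]
    have hd1 : (1 : ℝ) - q^k*E^k ≠ 0 := by rw [← hETr]; exact hden.ne'
    have hd2 : q*E - 1 ≠ 0 := sub_ne_zero.mpr hqE.ne
    have hd3 : (1:ℝ) - q*E ≠ 0 := by nlinarith
    rw [hTr]
    field_simp
    rw [div_eq_div_iff (by rwa [mul_comm E q]) (by rwa [mul_comm E q])]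
    ring
  rw [hint]
  -- turn LHS into a sign condition on the exponent
  have hpow : (1-αx)^k = Real.exp ((k:ℝ) * Real.log (1-αx)) := by
    rw [← Real.log_pow, Real.exp_log (pow_pos (by linarith) k)]
  rw [hpow, ← Real.exp_add, Real.exp_lt_one_iff]
  set L : ℝ := Real.log (1-αx) with hL
  have h1E : (0:ℝ) < 1 - E := by linarith
  have h1qE : (0:ℝ) < 1 - q*E := by linarith
  have hbTh : (0:ℝ) < b*Th := by positivity
  constructor
  · intro h
    rw [gt_iff_lt, div_lt_iff₀ h1E]
    have hkey : d*(a*Th + L)*(1-q*E) < μ*(1-E)*(b*Th) := by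
      have h2 : b * (μ * Tr * (1-E)/(d*(1-q*E))) = b*μ*Tr*(1-E)/(d*(1-q*E)) := by ring
      have h3 : (k:ℝ)*L + a*Tr < b*μ*Tr*(1-E)/(d*(1-q*E)) := by rw [← h2]; linarith
      rw [lt_div_iff₀ (mul_pos hd h1qE)] at h3
      rw [hTr] at h3
      have h4 : (k:ℝ) * (d*(a*Th + L)*(1-q*E)) < (k:ℝ) * (μ*(1-E)*(b*Th)) := by nlinarith
      exact lt_of_mul_lt_mul_left h4 (le_of_lt hkR)
    have e : d*(a/b + L/(b*Th))*(1-q*E) = d*(a*Th+L)*(1-q*E)/(b*Th) := by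
      field_simp
    rw [e, div_lt_iff₀ hbTh]
    exact hkey
  · intro h
    rw [gt_iff_lt, div_lt_iff₀ h1E] at h
    have e : d*(a/b + L/(b*Th))*(1-q*E) = d*(a*Th+L)*(1-q*E)/(b*Th) := by
      field_simp
    have hkey : d*(a*Th + L)*(1-q*E) < μ*(1-E)*(b*Th) := by
      rw [e, div_lt_iff₀ hbTh] at h
      exact h
    have h3 : (k:ℝ)*L + a*Tr < b*μ*Tr*(1-E)/(d*(1-q*E)) := by
      rw [lt_div_iff₀ (mul_pos hd h1qE), hTr]
      nlinarith [mul_lt_mul_of_pos_left hkey hkR]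
    have h2 : b * (μ * Tr * (1-E)/(d*(1-q*E))) = b*μ*Tr*(1-E)/(d*(1-q*E)) := by ring
    rw [h2]
    linarith
end
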